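/- The round-robin algorithm in which agents, sorted in nonincreasing order of entitlement, repeatedly take (in cyclic order) their most valuable remaining item, produces an allocation in which every agent i receives a bundle of value at least WMMS_i / n. -/

import Mathlib

open Finset

/-- The weighted maxmin share of agent `i`. -/
noncomputable def WMMS {n m : ℕ} (e : Fin n → ℝ) (v : Fin m → ℝ) (i : Fin n) : ℝ :=
  ⨆ f : Fin m → Fin n, ⨅ j : Fin n,
    (∑ b ∈ Finset.univ.filter (fun b => f b = j), v b) * (e i / e j)

/-- Round-robin: agents are sorted in nonincreasing order of entitlement and pick
in cyclic order; `g t` is the item picked in round `t` (0-based), namely a most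
valuable remaining item for the picking agent `⟨t % n⟩`.  Every agent `i` ends
up with a bundle worth at least `WMMS_i / n`. -/
theorem stmt_6 (n m : ℕ) (hn : 0 < n)
    (e : Fin n → ℝ) (hepos : ∀ i, 0 < e i) (hesum : ∑ i, e i = 1)
    (hesorted : ∀ i j : Fin n, i ≤ j → e j ≤ e i)
    (V : Fin n → Fin m → ℝ) (hV : ∀ i b, 0 ≤ V i b)
    (g : Fin m → Fin m) (hginj : Function.Injective g)
    (hgreedy : ∀ t b : Fin m, (∀ s : Fin m, s < t → g s ≠ b) →
      V ⟨(t : ℕ) % n, Nat.mod_lt _ hn⟩ b ≤ V ⟨(t : ℕ) % n, Nat.mod_lt _ hn⟩ (g t)) :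
    ∀ i : Fin n,
      WMMS e (V i) i / n ≤
        ∑ t ∈ Finset.univ.filter (fun t : Fin m => (t : ℕ) % n = (i : ℕ)),
          V i (g t) := by
  classical
  have hnR : (0:ℝ) < n := by exact_mod_cast hn
  intro i
  set B : Finset (Fin m) := Finset.univ.filter (fun t : Fin m => (t : ℕ) % n = (i : ℕ)) with hBdef
  set R : ℝ := ∑ t ∈ B, V i (g t) with hRdef
  have hR0 : 0 ≤ R := Finset.sum_nonneg fun t _ => hV i (g t)
  -- step A : the sum of values of items picked at times ≥ i is at most n * R
  have hgsurj : Function.Surjective g := Finite.surjective_of_injective hginj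
  set A : Finset (Fin m) := Finset.univ.filter (fun t : Fin m => (i : ℕ) ≤ (t : ℕ)) with hAdef
  -- the "round index of agent i's pick governing time t"
  set K : ℕ → ℕ := fun t => (i : ℕ) + n * ((t - (i : ℕ)) / n) with hKdef
  have hKle : ∀ t : ℕ, (i : ℕ) ≤ t → K t ≤ t := by
    intro t ht
    have h1 : (t - (i : ℕ)) / n * n ≤ t - (i : ℕ) := Nat.div_mul_le_self _ _
    have h2 : n * ((t - (i : ℕ)) / n) = (t - (i : ℕ)) / n * n := Nat.mul_comm _ _
    simp only [hKdef]
    omega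
  have hKlt : ∀ t : ℕ, (i : ℕ) ≤ t → t < K t + n := by
    intro t ht
    have h1 : t - (i : ℕ) < (t - (i : ℕ)) / n * n + n := Nat.lt_div_mul_add hn
    have h2 : n * ((t - (i : ℕ)) / n) = (t - (i : ℕ)) / n * n := Nat.mul_comm _ _
    simp only [hKdef]
    omega
  have hKmod : ∀ t : ℕ, K t % n = (i : ℕ) := by
    intro t
    simp [hKdef, Nat.add_mul_mod_self_left, Nat.mod_eq_of_lt i.isLt]
  set k : Fin m → Fin m := fun t => if h : K (t : ℕ) < m then ⟨K (t : ℕ), h⟩ else t with hkdef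
  have hkval : ∀ t ∈ A, ((k t : ℕ)) = K (t : ℕ) := by
    intro t ht
    have hti : (i : ℕ) ≤ (t : ℕ) := by simpa [hAdef] using ht
    have : K (t : ℕ) < m := lt_of_le_of_lt (hKle _ hti) t.isLt
    simp [hkdef, this]
  have hkB : ∀ t ∈ A, k t ∈ B := by
    intro t ht
    simp only [hBdef, Finset.mem_filter, Finset.mem_univ, true_and]
    rw [hkval t ht]; exact hKmod _
  have hstepA : ∑ t ∈ A, V i (g t) ≤ n * R := by
    have h1 : ∑ t ∈ A, V i (g t) ≤ ∑ t ∈ A, V i (g (k t)) := by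
      apply Finset.sum_le_sum
      intro t ht
      have hti : (i : ℕ) ≤ (t : ℕ) := by simpa [hAdef] using ht
      have hkt : ((k t : ℕ)) = K (t : ℕ) := hkval t ht
      have hle : k t ≤ t := by rw [Fin.le_def, hkt]; exact hKle _ hti
      have := hgreedy (k t) (g t) (by
        intro s hs hgs
        exact absurd (hginj hgs) (by
          intro h; rw [h] at hs; exact absurd (lt_of_lt_of_le hs hle) (lt_irrefl _)))
      have hidx : (⟨((k t : ℕ)) % n, Nat.mod_lt _ hn⟩ : Fin n) = i := by
        apply Fin.ext; simp [hkt, hKmod]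
      rwa [hidx] at this
    have h2 : ∑ t ∈ A, V i (g (k t)) = ∑ u ∈ B, ∑ t ∈ A.filter (fun t => k t = u), V i (g (k t)) :=
      (Finset.sum_fiberwise_of_maps_to hkB _).symm
    have h3 : ∀ u ∈ B, ∑ t ∈ A.filter (fun t => k t = u), V i (g (k t)) ≤ n * V i (g u) := by
      intro u hu
      have hcard : (A.filter (fun t => k t = u)).card ≤ n := by
        have hsub : ∀ t ∈ A.filter (fun t => k t = u), (t : ℕ) ∈ Finset.Ico (u : ℕ) ((u : ℕ) + n) := by
          intro t ht
          obtain ⟨htA, htk⟩ := Finset.mem_filter.mp ht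
          have hti : (i : ℕ) ≤ (t : ℕ) := by simpa [hAdef] using htA
          have hKt : K (t : ℕ) = (u : ℕ) := by rw [← hkval t htA, htk]
          rw [Finset.mem_Ico, ← hKt]
          exact ⟨hKle _ hti, hKlt _ hti⟩
        calc (A.filter (fun t => k t = u)).card
            ≤ (Finset.Ico (u : ℕ) ((u : ℕ) + n)).card :=
              Finset.card_le_card_of_injOn (fun t => (t : ℕ)) hsub
                (fun a _ b _ h => Fin.ext h)
          _ = n := by rw [Nat.card_Ico]; omega
      calc ∑ t ∈ A.filter (fun t => k t = u), V i (g (k t))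
          = ∑ t ∈ A.filter (fun t => k t = u), V i (g u) := by
            apply Finset.sum_congr rfl; intro t ht
            rw [(Finset.mem_filter.mp ht).2]
        _ = (A.filter (fun t => k t = u)).card * V i (g u) := by
            rw [Finset.sum_const, nsmul_eq_mul]
        _ ≤ n * V i (g u) := by
            apply mul_le_mul_of_nonneg_right _ (hV i (g u))
            exact_mod_cast hcard
    calc ∑ t ∈ A, V i (g t) ≤ ∑ t ∈ A, V i (g (k t)) := h1
      _ = ∑ u ∈ B, ∑ t ∈ A.filter (fun t => k t = u), V i (g (k t)) := h2
      _ ≤ ∑ u ∈ B, (n : ℝ) * V i (g u) := Finset.sum_le_sum h3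
      _ = n * R := by rw [hRdef, Finset.mul_sum]
  -- the set of items picked before agent i's first turn
  set S : Finset (Fin m) := Finset.univ.filter (fun s : Fin m => (s : ℕ) < (i : ℕ)) with hSdef
  set F : Finset (Fin m) := S.image g with hFdef
  have himageA : A.image g = Finset.univ.filter (fun b => b ∉ F) := by
    ext b
    constructor
    · intro hb
      obtain ⟨t, ht, rfl⟩ := Finset.mem_image.mp hb
      have hti : (i : ℕ) ≤ (t : ℕ) := (Finset.mem_filter.mp ht).2
      refine Finset.mem_filter.mpr ⟨Finset.mem_univ _, ?_⟩
      intro hgF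
      obtain ⟨s, hs, hgs⟩ := Finset.mem_image.mp hgF
      have hsi : (s : ℕ) < (i : ℕ) := (Finset.mem_filter.mp hs).2
      have heq := hginj hgs
      rw [heq] at hsi
      omega
    · intro hb
      have hb2 := (Finset.mem_filter.mp hb).2
      obtain ⟨t, rfl⟩ := hgsurj b
      refine Finset.mem_image.mpr ⟨t, Finset.mem_filter.mpr ⟨Finset.mem_univ _, ?_⟩, rfl⟩
      by_contra h
      push_neg at h
      exact hb2 (Finset.mem_image.mpr ⟨t, Finset.mem_filter.mpr ⟨Finset.mem_univ _, h⟩, rfl⟩)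
  have key : WMMS e (V i) i ≤ n * R := by
    have hne : Nonempty (Fin n) := ⟨⟨0, hn⟩⟩
    apply Real.iSup_le _ (by positivity)
    intro f
    -- pigeonhole: find j* ≤ i whose bundle avoids F
    have hScard : S.card ≤ (i : ℕ) := by
      calc S.card ≤ (Finset.range (i : ℕ)).card := by
            apply Finset.card_le_card_of_injOn (fun s : Fin m => (s : ℕ))
            · intro s hs; simp only [hSdef, Finset.mem_coe, Finset.mem_filter] at hs
              exact Finset.mem_range.mpr hs.2
            · exact fun a _ b _ h => Fin.ext h
        _ = (i : ℕ) := Finset.card_range _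
    have hpig : ¬ (Finset.Iic i ⊆ S.image (fun s => f (g s))) := by
      intro hsub
      have h1 := Finset.card_le_card hsub
      have h2 := Finset.card_image_le (s := S) (f := fun s => f (g s))
      rw [Fin.card_Iic] at h1
      omega
    obtain ⟨j, hjT, hjim⟩ := Finset.not_subset.mp hpig
    have hji : j ≤ i := Finset.mem_Iic.mp hjT
    have hstep1 : (⨅ j' : Fin n, (∑ b ∈ Finset.univ.filter (fun b => f b = j'), V i b) * (e i / e j'))
        ≤ (∑ b ∈ Finset.univ.filter (fun b => f b = j), V i b) * (e i / e j) := by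
      apply ciInf_le
      exact (Set.finite_range _).bddBelow
    have hsum0 : 0 ≤ ∑ b ∈ Finset.univ.filter (fun b => f b = j), V i b :=
      Finset.sum_nonneg fun b _ => hV i b
    have hstep2 : (∑ b ∈ Finset.univ.filter (fun b => f b = j), V i b) * (e i / e j)
        ≤ ∑ b ∈ Finset.univ.filter (fun b => f b = j), V i b := by
      apply mul_le_of_le_one_right hsum0
      rw [div_le_one (hepos j)]
      exact hesorted j i hji
    have hstep3 : (∑ b ∈ Finset.univ.filter (fun b => f b = j), V i b)
        ≤ ∑ b ∈ Finset.univ.filter (fun b => b ∉ F), V i b := by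
      apply Finset.sum_le_sum_of_subset_of_nonneg
      · intro b hb
        simp only [Finset.mem_filter, Finset.mem_univ, true_and] at hb ⊢
        intro hbF
        obtain ⟨s, hs, rfl⟩ := Finset.mem_image.mp hbF
        exact hjim (Finset.mem_image.mpr ⟨s, hs, hb⟩)
      · exact fun b _ _ => hV i b
    have hstep4 : (∑ b ∈ Finset.univ.filter (fun b => b ∉ F), V i b) ≤ n * R := by
      rw [← himageA, Finset.sum_image (fun a _ b _ h => hginj h)]
      exact hstepA
    calc (⨅ j' : Fin n, (∑ b ∈ Finset.univ.filter (fun b => f b = j'), V i b) * (e i / e j'))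
        ≤ _ := hstep1
      _ ≤ _ := hstep2
      _ ≤ _ := hstep3
      _ ≤ n * R := hstep4
  rw [div_le_iff₀ hnR]
  calc WMMS e (V i) i ≤ n * R := key
    _ = R * n := mul_comm _ _
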